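/- For a standard normal random variable ξ ~ N(0,1), the expectation of ln|ξ| equals -(γ + ln 2)/2, where γ is the Euler–Mascheroni constant. Equivalently, E[ln|ξ|] = ln(1/(√2 · e^{γ/2})). -/

import Mathlib

open MeasureTheory ProbabilityTheory Set Filter Topology
open scoped ENNReal NNReal

local notation "γ" => Real.eulerMascheroniConstant

lemma logGamma_aux {s : ℂ} (hs : 0 < s.re) :
    MellinConvergent (fun t : ℝ => Real.log t • ((Real.exp (-t) : ℝ) : ℂ)) s ∧
    HasDerivAt Complex.GammaIntegral
      (∫ t : ℝ in Ioi 0, (t : ℂ) ^ (s - 1) • (Real.log t • ((Real.exp (-t) : ℝ) : ℂ))) s := by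
  have h := mellin_hasDerivAt_of_isBigO_rpow (E := ℂ)
      (f := fun t : ℝ => ((Real.exp (-t) : ℝ) : ℂ)) (s := s) (b := 0)
      ?_ ?_ (lt_add_one _) ?_ hs
  · refine ⟨h.1, ?_⟩
    rw [Complex.GammaIntegral_eq_mellin]
    exact h.2
  · refine (Continuous.continuousOn ?_).locallyIntegrableOn measurableSet_Ioi
    exact Complex.continuous_ofReal.comp (Real.continuous_exp.comp continuous_neg)
  · rw [← Asymptotics.isBigO_norm_left]
    simp_rw [Complex.norm_real,
      Asymptotics.isBigO_norm_left]
    simpa only [neg_one_mul] using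
      (isLittleO_exp_neg_mul_rpow_atTop zero_lt_one _).isBigO
  · simp_rw [neg_zero, Real.rpow_zero]
    refine Asymptotics.isBigO_const_of_tendsto (?_ : Tendsto _ _ (𝓝 (1 : ℂ))) one_ne_zero
    rw [(by simp : (1 : ℂ) = Real.exp (-0))]
    exact (Complex.continuous_ofReal.comp
      (Real.continuous_exp.comp continuous_neg)).continuousWithinAt

lemma pointwise_eq {t : ℝ} (ht : t ∈ Ioi (0:ℝ)) :
    (t : ℂ) ^ ((1/2 : ℂ) - 1) • (Real.log t • ((Real.exp (-t) : ℝ) : ℂ)) =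
      ((t ^ (-(1/2) : ℝ) * (Real.log t * Real.exp (-t)) : ℝ) : ℂ) := by
  have ht' : (0:ℝ) ≤ t := le_of_lt ht
  have : ((1/2 : ℂ) - 1) = ((-(1/2) : ℝ) : ℂ) := by norm_num
  rw [this, ← Complex.ofReal_cpow ht']
  simp only [smul_eq_mul, Complex.real_smul]
  push_cast
  ring

lemma gammaDerivHalf :
    ∫ t : ℝ in Ioi 0, t ^ (-(1/2) : ℝ) * (Real.log t * Real.exp (-t)) =
      -Real.sqrt Real.pi * (γ + 2 * Real.log 2) := by
  have hs : (0:ℝ) < (1/2 : ℂ).re := by norm_num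
  have h := logGamma_aux hs
  -- complex integral equals ofReal of real integral
  have hint : (∫ t : ℝ in Ioi 0, (t : ℂ) ^ ((1/2:ℂ) - 1) • (Real.log t • ((Real.exp (-t) : ℝ) : ℂ)))
      = ((∫ t : ℝ in Ioi 0, t ^ (-(1/2) : ℝ) * (Real.log t * Real.exp (-t)) : ℝ) : ℂ) := by
    exact (setIntegral_congr_fun measurableSet_Ioi fun t ht => pointwise_eq ht).trans
      integral_ofReal
  -- Gamma has this derivative at 1/2
  have hG : HasDerivAt Complex.Gamma
      (((∫ t : ℝ in Ioi 0, t ^ (-(1/2) : ℝ) * (Real.log t * Real.exp (-t)) : ℝ) : ℂ)) (1/2) := by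
    rw [← hint]
    refine h.2.congr_of_eventuallyEq ?_
    filter_upwards [IsOpen.mem_nhds (isOpen_lt continuous_const Complex.continuous_re) hs]
      with z hz using Complex.Gamma_eq_integral hz
  -- restrict to ℝ
  have h2 : HasDerivAt (fun x : ℝ => Complex.Gamma x)
      (((∫ t : ℝ in Ioi 0, t ^ (-(1/2) : ℝ) * (Real.log t * Real.exp (-t)) : ℝ) : ℂ)) (1/2) := by
    rw [show ((1/2:ℂ)) = ((1/2:ℝ):ℂ) by norm_num] at hG
    have := hG.comp_ofReal
    simpa using this
  have h3 : HasDerivAt (fun x : ℝ => ((Real.Gamma x : ℝ) : ℂ))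
      ((↑(-Real.sqrt Real.pi * (γ + 2 * Real.log 2)) : ℂ)) (1/2) :=
    Real.hasDerivAt_Gamma_one_half.ofReal_comp
  have h4 : HasDerivAt (fun x : ℝ => Complex.Gamma x)
      ((↑(-Real.sqrt Real.pi * (γ + 2 * Real.log 2)) : ℂ)) (1/2) := by
    refine h3.congr_of_eventuallyEq (Eventually.of_forall fun x => ?_)
    simpa using Complex.Gamma_ofReal x
  exact_mod_cast h2.unique h4

lemma logGamma_integrable :
    IntegrableOn (fun t : ℝ => t ^ (-(1/2) : ℝ) * (Real.log t * Real.exp (-t))) (Ioi 0) := by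
  have hs : (0:ℝ) < (1/2 : ℂ).re := by norm_num
  have h := (logGamma_aux hs).1
  have h' : IntegrableOn
      (fun t : ℝ => ((t ^ (-(1/2) : ℝ) * (Real.log t * Real.exp (-t)) : ℝ) : ℂ)) (Ioi 0) := by
    refine h.congr ?_
    filter_upwards [ae_restrict_mem measurableSet_Ioi] with t ht using pointwise_eq ht
  have h'' := h'.re
  simp only [RCLike.re_to_complex, Complex.ofReal_re] at h''
  exact h''

lemma gammaHalfInt :
    ∫ t : ℝ in Ioi 0, t ^ (-(1/2) : ℝ) * Real.exp (-t) = Real.sqrt Real.pi := by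
  rw [← Real.Gamma_one_half_eq, Real.Gamma_eq_integral one_half_pos]
  refine setIntegral_congr_fun measurableSet_Ioi fun t ht => ?_
  rw [mul_comm]
  norm_num

lemma gammaHalfIntegrable :
    IntegrableOn (fun t : ℝ => t ^ (-(1/2) : ℝ) * Real.exp (-t)) (Ioi 0) := by
  have := Real.GammaIntegral_convergent one_half_pos
  refine this.congr_fun (fun t ht => ?_) measurableSet_Ioi
  rw [mul_comm]
  norm_num

lemma rpow_neg_half {t : ℝ} (ht : 0 < t) : t ^ (-(1/2) : ℝ) = (Real.sqrt t)⁻¹ := by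
  rw [Real.rpow_neg ht.le, ← Real.sqrt_eq_rpow]

lemma I_pos :
    ∫ x : ℝ in Ioi 0, Real.log x * Real.exp (-x^2/2) =
      Real.sqrt Real.pi * (-(γ + Real.log 2)) / (2 * Real.sqrt 2) := by
  set g : ℝ → ℝ := fun t => (2 * Real.sqrt t)⁻¹ * (Real.log t / 2 * Real.exp (-t/2)) with hg
  have hA : ∫ x : ℝ in Ioi 0, ((2:ℝ) * x ^ ((2:ℝ)-1)) • g (x ^ (2:ℝ)) = ∫ t in Ioi 0, g t :=
    integral_comp_rpow_Ioi_of_pos two_pos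
  have hA' : ∫ x : ℝ in Ioi 0, ((2:ℝ) * x ^ ((2:ℝ)-1)) • g (x ^ (2:ℝ)) =
      ∫ x : ℝ in Ioi 0, Real.log x * Real.exp (-x^2/2) := by
    refine setIntegral_congr_fun measurableSet_Ioi fun x hx => ?_
    have hx0 : (0:ℝ) < x := hx
    have h2 : x ^ ((2:ℝ)) = x ^ 2 := by
      rw [show ((2:ℝ)) = ((2:ℕ):ℝ) by norm_num, Real.rpow_natCast]
    have h1 : x ^ ((2:ℝ)-1) = x := by norm_num
    rw [smul_eq_mul, h1, h2, hg]
    simp only [Real.sqrt_sq hx0.le, Real.log_pow]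
    push_cast
    field_simp
  have hB := integral_comp_mul_left_Ioi g 0 two_pos
  have int1 : IntegrableOn
      (fun t : ℝ => Real.log 2 * (t ^ (-(1/2) : ℝ) * Real.exp (-t))) (Ioi 0) :=
    gammaHalfIntegrable.const_mul _
  have hC : ∫ t : ℝ in Ioi 0, g (2*t) =
      (4 * Real.sqrt 2)⁻¹ * (Real.log 2 * Real.sqrt Real.pi +
        -Real.sqrt Real.pi * (γ + 2 * Real.log 2)) := by
    have heq : ∫ t : ℝ in Ioi 0, g (2*t) =
        ∫ t : ℝ in Ioi 0, (4 * Real.sqrt 2)⁻¹ *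
          (Real.log 2 * (t ^ (-(1/2) : ℝ) * Real.exp (-t)) +
            t ^ (-(1/2) : ℝ) * (Real.log t * Real.exp (-t))) := by
      refine setIntegral_congr_fun measurableSet_Ioi fun t ht => ?_
      have ht0 : (0:ℝ) < t := ht
      have hs2 : Real.sqrt 2 ≠ 0 := by positivity
      have hst : Real.sqrt t ≠ 0 := by positivity
      rw [hg]
      simp only
      rw [Real.sqrt_mul (by norm_num : (0:ℝ) ≤ 2),
        Real.log_mul (by norm_num) ht0.ne', rpow_neg_half ht0,
        show (-(2*t)/2 : ℝ) = -t by ring]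
      field_simp
      ring
    rw [heq, MeasureTheory.integral_const_mul, integral_add int1 logGamma_integrable,
      MeasureTheory.integral_const_mul, gammaHalfInt, gammaDerivHalf]
  have key : ∫ x : ℝ in Ioi 0, Real.log x * Real.exp (-x^2/2) =
      2 * ∫ t : ℝ in Ioi 0, g (2*t) := by
    rw [hC.symm] at *
    rw [← hA', hA]
    rw [hB]
    simp
  rw [key, hC]
  have hs2 : Real.sqrt 2 ≠ 0 := by positivity
  field_simp
  ring

theorem expectation_log_abs_gaussian :
    ∫ x, Real.log |x| ∂(gaussianReal 0 1) =
      -((Real.eulerMascheroniConstant + Real.log 2) / 2) := by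
  rw [gaussianReal_of_var_ne_zero 0 one_ne_zero]
  have hmeas : Measurable fun x : ℝ => (gaussianPDFReal 0 1 x).toNNReal :=
    (measurable_gaussianPDFReal 0 1).real_toNNReal
  rw [show gaussianPDF 0 1 = fun x => ((gaussianPDFReal 0 1 x).toNNReal : ℝ≥0∞) from rfl,
    integral_withDensity_eq_integral_smul hmeas (fun x => Real.log |x|)]
  have hfun : (fun x : ℝ => (gaussianPDFReal 0 1 x).toNNReal • Real.log |x|) =
      fun x : ℝ =>
        (Real.sqrt (2 * Real.pi))⁻¹ * (Real.log |x| * Real.exp (-(|x|)^2/2)) := by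
    funext x
    rw [NNReal.smul_def, Real.coe_toNNReal _ (gaussianPDFReal_nonneg 0 1 x)]
    simp only [gaussianPDFReal, NNReal.coe_one, mul_one, sub_zero, sq_abs, smul_eq_mul]
    ring
  rw [hfun,
    integral_comp_abs
      (f := fun y => (Real.sqrt (2 * Real.pi))⁻¹ * (Real.log y * Real.exp (-y^2/2))),
    MeasureTheory.integral_const_mul, I_pos]
  have h1 : Real.sqrt 2 * Real.sqrt 2 = 2 := Real.mul_self_sqrt (by norm_num)
  have h2 : Real.sqrt 2 ≠ 0 := by positivity
  have h3 : Real.sqrt Real.pi ≠ 0 := by positivity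
  rw [Real.sqrt_mul (by norm_num : (0:ℝ) ≤ 2)]
  field_simp
  ring_nf
  rw [Real.sq_sqrt (by norm_num : (0:ℝ) ≤ 2)]
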